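/- Let X be a real Hilbert space and A, B nonempty closed convex subsets of X. Suppose there exist x₀ ∈ A ∩ B and f ∈ X* \ {0} such that inf f(B) = f(x₀) = sup f(A) and f strongly exposes A at x₀. Then for every starting point c₀ ∈ X, the (unperturbed) alternating projections sequences defined by d_n = P_B(c_{n−1}) and c_n = P_A(d_n) converge in norm to x₀. -/

import Mathlib

open Filter Metric Topology

/-- `p` is a metric projection (nearest point) of `x` onto `K`. -/
def IsProjOn {X : Type*} [NormedAddCommGroup X] (K : Set X) (x p : X) : Prop :=
  p ∈ K ∧ ∀ y ∈ K, dist x p ≤ dist x y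

/-- `f` strongly exposes `A` at `a`. -/
def StronglyExposes {X : Type*} [NormedAddCommGroup X] [NormedSpace ℝ X]
    (f : X →L[ℝ] ℝ) (A : Set X) (a : X) : Prop :=
  a ∈ A ∧ (∀ x ∈ A, f x ≤ f a) ∧
    ∀ x : ℕ → X, (∀ n, x n ∈ A) → Tendsto (fun n => f (x n)) atTop (nhds (f a)) →
      Tendsto x atTop (nhds a)

lemma isProjOn_inner {X : Type*} [NormedAddCommGroup X] [InnerProductSpace ℝ X]
    {K : Set X} (hK : Convex ℝ K) {x p : X} (h : IsProjOn K x p) :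
    ∀ y ∈ K, inner ℝ (x - p) (y - p) ≤ (0 : ℝ) := by
  have : Nonempty K := ⟨⟨p, h.1⟩⟩
  have hinf : ‖x - p‖ = ⨅ w : K, ‖x - w‖ := by
    apply le_antisymm
    · apply le_ciInf
      intro w
      rw [← dist_eq_norm, ← dist_eq_norm]
      exact h.2 w w.2
    · exact ciInf_le ⟨0, by rintro r ⟨w, rfl⟩; exact norm_nonneg _⟩ (⟨p, h.1⟩ : K)
  exact (norm_eq_iInf_iff_real_inner_le_zero hK h.1).mp hinf

lemma isProjOn_sq {X : Type*} [NormedAddCommGroup X] [InnerProductSpace ℝ X]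
    {K : Set X} (hK : Convex ℝ K) {x p z : X} (h : IsProjOn K x p) (hz : z ∈ K) :
    ‖x - p‖ ^ 2 + ‖p - z‖ ^ 2 ≤ ‖x - z‖ ^ 2 := by
  have key := isProjOn_inner hK h z hz
  have h1 : ‖x - z‖ ^ 2 = ‖x - p‖ ^ 2 - 2 * inner ℝ (x - p) (z - p) + ‖z - p‖ ^ 2 := by
    rw [show x - z = (x - p) - (z - p) by abel, norm_sub_sq_real]
  have h2 : ‖p - z‖ = ‖z - p‖ := norm_sub_rev _ _
  rw [h2]
  linarith

theorem stmt19 {X : Type*} [NormedAddCommGroup X] [InnerProductSpace ℝ X] [CompleteSpace X]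
    (A B : Set X) (hAne : A.Nonempty) (hAc : IsClosed A) (hAv : Convex ℝ A)
    (hBne : B.Nonempty) (hBc : IsClosed B) (hBv : Convex ℝ B)
    (x₀ : X) (hx₀ : x₀ ∈ A ∩ B)
    (f : X →L[ℝ] ℝ) (hf : f ≠ 0)
    (hinf : ∀ x ∈ B, f x₀ ≤ f x) (hsup : ∀ x ∈ A, f x ≤ f x₀)
    (hexp : StronglyExposes f A x₀)
    (c₀ : X) (c d : ℕ → X) (hc0 : c 0 = c₀)
    (hcd : ∀ n : ℕ, IsProjOn B (c n) (d (n + 1)) ∧ IsProjOn A (d (n + 1)) (c (n + 1))) :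
    Tendsto c atTop (nhds x₀) ∧ Tendsto d atTop (nhds x₀) := by
  set u : ℕ → ℝ := fun n => ‖c n - x₀‖ ^ 2 with hu_def
  have hA : ∀ n, ‖d (n + 1) - c (n + 1)‖ ^ 2 + ‖c (n + 1) - x₀‖ ^ 2 ≤ ‖d (n + 1) - x₀‖ ^ 2 :=
    fun n => isProjOn_sq hAv (hcd n).2 hx₀.1
  have hB : ∀ n, ‖c n - d (n + 1)‖ ^ 2 + ‖d (n + 1) - x₀‖ ^ 2 ≤ ‖c n - x₀‖ ^ 2 :=
    fun n => isProjOn_sq hBv (hcd n).1 hx₀.2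
  have key : ∀ n, ‖d (n + 1) - c (n + 1)‖ ^ 2 ≤ u n - u (n + 1) := by
    intro n
    have h1 := hA n
    have h2 := hB n
    have h3 : (0 : ℝ) ≤ ‖c n - d (n + 1)‖ ^ 2 := sq_nonneg _
    simp only [hu_def]
    linarith
  -- u is antitone and bounded below, hence converges
  have hanti : Antitone u := by
    apply antitone_nat_of_succ_le
    intro n
    have := key n
    have := sq_nonneg ‖d (n + 1) - c (n + 1)‖
    linarith
  have hbdd : BddBelow (Set.range u) := ⟨0, by rintro r ⟨n, rfl⟩; exact sq_nonneg _⟩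
  have huL : Tendsto u atTop (nhds (⨅ n, u n)) := tendsto_atTop_ciInf hanti hbdd
  have hdiff : Tendsto (fun n => u n - u (n + 1)) atTop (nhds 0) := by
    have := huL.sub (huL.comp (tendsto_add_atTop_nat 1))
    simpa using this
  have hsq0 : Tendsto (fun n => ‖d (n + 1) - c (n + 1)‖ ^ 2) atTop (nhds 0) :=
    tendsto_of_tendsto_of_tendsto_of_le_of_le tendsto_const_nhds hdiff
      (fun n => sq_nonneg _) key
  have hnorm : Tendsto (fun n => ‖d (n + 1) - c (n + 1)‖) atTop (nhds 0) := by
    have heq : (fun n => ‖d (n + 1) - c (n + 1)‖)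
        = fun n => Real.sqrt (‖d (n + 1) - c (n + 1)‖ ^ 2) := by
      funext n; rw [Real.sqrt_sq (norm_nonneg _)]
    rw [heq]
    have := (Real.continuous_sqrt.tendsto 0).comp hsq0
    simpa [Function.comp_def] using this
  -- f (c (n+1)) → f x₀
  have hlow : ∀ n, f x₀ - ‖f‖ * ‖d (n + 1) - c (n + 1)‖ ≤ f (c (n + 1)) := by
    intro n
    have h1 : f x₀ ≤ f (d (n + 1)) := hinf _ (hcd n).1.1
    have h2 : f (d (n + 1)) - f (c (n + 1)) ≤ ‖f‖ * ‖d (n + 1) - c (n + 1)‖ := by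
      calc f (d (n + 1)) - f (c (n + 1)) = f (d (n + 1) - c (n + 1)) := by rw [map_sub]
        _ ≤ ‖f (d (n + 1) - c (n + 1))‖ := le_abs_self _
        _ ≤ ‖f‖ * ‖d (n + 1) - c (n + 1)‖ := f.le_opNorm _
    linarith
  have hlowT : Tendsto (fun n => f x₀ - ‖f‖ * ‖d (n + 1) - c (n + 1)‖) atTop (nhds (f x₀)) := by
    have := (tendsto_const_nhds : Tendsto (fun _ : ℕ => f x₀) atTop (nhds (f x₀))).sub
      (hnorm.const_mul ‖f‖)
    simpa using this
  have hfc : Tendsto (fun n => f (c (n + 1))) atTop (nhds (f x₀)) :=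
    tendsto_of_tendsto_of_tendsto_of_le_of_le hlowT tendsto_const_nhds hlow
      (fun n => hsup _ (hcd n).2.1)
  have hc1 : Tendsto (fun n => c (n + 1)) atTop (nhds x₀) :=
    hexp.2.2 _ (fun n => (hcd n).2.1) hfc
  have hcT : Tendsto c atTop (nhds x₀) := (tendsto_add_atTop_iff_nat 1).mp hc1
  have hdc : Tendsto (fun n => d (n + 1) - c (n + 1)) atTop (nhds 0) :=
    tendsto_zero_iff_norm_tendsto_zero.mpr hnorm
  have hd1 : Tendsto (fun n => d (n + 1)) atTop (nhds x₀) := by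
    have := hdc.add hc1
    simpa using this
  exact ⟨hcT, (tendsto_add_atTop_iff_nat 1).mp hd1⟩
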